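/- arXiv:1309.6070 — 2 statements merged into one kernel-verified Lean document; each statement's English description precedes it below -/
import Mathlib

section
/- For every oriented word u of rank k ≥ 2, the weight function τ_u : F_k → ℝ is a quasi-character of defect exactly 1/2. Moreover, |τ_u(g) + τ_u(h) − τ_u(gh)| equals 0 if g = e or h = e or gh = e, and equals 1/2 if g ≠ e, h ≠ e, and gh ≠ e. -/
open FreeGroup

/-- A letter over the alphabet `{a_1,...,a_k, a_1⁻¹,...,a_k⁻¹}`:
`(i, true)` is the positive letter `a_i`, `(i, false)` is `a_i⁻¹`. -/
abbrev Letter (k : ℕ) := Fin k × Bool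

/-- Formal inverse of a letter. -/
def invL {k : ℕ} (x : Letter k) : Letter k := (x.1, !x.2)

/-- An oriented word of rank `k`: each of the `2k` letters appears exactly once. -/
def IsOriented {k : ℕ} (u : List (Letter k)) : Prop :=
  u.Nodup ∧ ∀ x : Letter k, x ∈ u

/-- `x` occurs to the left of `y` in `u`. -/
def leftOf {k : ℕ} (u : List (Letter k)) (x y : Letter k) : Prop :=
  u.idxOf x < u.idxOf y

instance {k : ℕ} (u : List (Letter k)) (x y : Letter k) : Decidable (leftOf u x y) :=
  inferInstanceAs (Decidable (_ < _))

/-- Number of occurrences of the two-letter word `xy` as a contiguous subword of `L`. -/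
def cnt {k : ℕ} (L : List (Letter k)) (x y : Letter k) : ℕ :=
  (L.zip L.tail).count (x, y)

/-- The case transition weight `α_u`, on a reduced word `L`. -/
noncomputable def alphaW {k : ℕ} (u L : List (Letter k)) : ℝ :=
  (∑ a : Fin k, ∑ b : Fin k,
      if leftOf u (a, false) (b, false) then (cnt L (a, true) (b, false) : ℝ) else 0)
  - ∑ a : Fin k, ∑ b : Fin k,
      if leftOf u (a, true) (b, true) then (cnt L (b, false) (a, true) : ℝ) else 0

/-- The letter transition weight `β_u`, on a reduced word `L`. -/
noncomputable def betaW {k : ℕ} (u L : List (Letter k)) : ℝ :=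
  (∑ a : Fin k, ∑ b : Fin k,
      if leftOf u (a, false) (b, true) then (cnt L (a, true) (b, true) : ℝ) else 0)
  - ∑ a : Fin k, ∑ b : Fin k,
      if leftOf u (a, false) (b, true) then (cnt L (b, false) (a, false) : ℝ) else 0

/-- The last letter weight `ω`, on a reduced word `L`. -/
noncomputable def omegaW {k : ℕ} (L : List (Letter k)) : ℝ :=
  match L.getLast? with
  | none => 0
  | some x => if x.2 then 1 / 2 else -(1 / 2)

/-- The weight `τ_u` induced by an oriented word `u`, evaluated on the reduced form. -/
noncomputable def tau {k : ℕ} (u : List (Letter k)) (g : FreeGroup (Fin k)) : ℝ :=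
  alphaW u g.toWord + betaW u g.toWord + omegaW g.toWord

/-- The weight contribution `wtc_u` of a reduced two-letter word `xy`. -/
noncomputable def wtc {k : ℕ} (u : List (Letter k)) (x y : Letter k) : ℝ :=
  if x.2 then (if leftOf u (x.1, false) y then 1 else 0)
  else (if leftOf u y (x.1, true) then -1 else 0)

/-- The inverse word of `u`. -/
def invWord {k : ℕ} (u : List (Letter k)) : List (Letter k) := (u.map invL).reverse

/-- A function `τ : G → ℝ` with small relative defect. -/
def SmallRelDefect {G : Type*} [Group G] (τ : G → ℝ) : Prop :=
  τ 1 = 0 ∧ ∀ g h : G, (g ≠ 1 ∨ h ≠ 1) → |τ g + τ h - τ (g * h)| < |τ g| + |τ h|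

/-- The no-cancellation relation. -/
def NC {k : ℕ} (x y : Letter k) : Prop := y ≠ invL x

lemma cancel_iff {k : ℕ} (x y : Letter k) : (x.1 = y.1 ∧ x.2 = !y.2) ↔ y = invL x := by
  obtain ⟨a, s⟩ := x; obtain ⟨b, t⟩ := y
  simp only [invL, Prod.mk.injEq]
  cases s <;> cases t <;> simp [eq_comm]

lemma chain'_reduce {k : ℕ} (L : List (Letter k)) : List.IsChain NC (reduce L) := by
  induction L with
  | nil => simp
  | cons x L ih =>
    rw [reduce.cons]
    rcases hr : reduce L with _ | ⟨y, t⟩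
    · simp
    · rw [hr] at ih
      by_cases hc : x.1 = y.1 ∧ x.2 = !y.2
      · simpa [hc] using ih.tail
      · simp only [hc, if_neg, if_false]
        exact List.IsChain.cons_cons (fun h => hc ((cancel_iff x y).2 h)) ih

lemma reduce_eq_self_of_chain' {k : ℕ} {L : List (Letter k)} (h : List.IsChain NC L) :
    reduce L = L := by
  induction L with
  | nil => rfl
  | cons x L ih =>
    rw [reduce.cons, ih h.tail]
    rcases L with _ | ⟨y, t⟩
    · rfl
    · have hnc : NC x y := List.isChain_cons_cons.1 h |>.1
      have : ¬(x.1 = y.1 ∧ x.2 = !y.2) := fun hc => hnc ((cancel_iff x y).1 hc)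
      simp [this]

lemma chain'_toWord {k : ℕ} (g : FreeGroup (Fin k)) : List.IsChain NC g.toWord := by
  rw [← reduce_toWord]; exact chain'_reduce _

lemma invRev_cons {k : ℕ} (x : Letter k) (L : List (Letter k)) :
    invRev (x :: L) = invRev L ++ [invL x] := by
  simp [invRev, invL]

lemma invL_invL {k : ℕ} (x : Letter k) : invL (invL x) = x := by
  simp [invL]

/-- Structure of the reduction of a concatenation of two reduced words. -/
lemma structure_aux {k : ℕ} : ∀ (n : ℕ) (L1 L2 : List (Letter k)), L1.length ≤ n →
    List.IsChain NC L1 →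
    List.IsChain NC L2 →
    ∃ P C Q : List (Letter k), L1 = P ++ C ∧ L2 = invRev C ++ Q ∧
      reduce (L1 ++ L2) = P ++ Q ∧
      (∀ p ∈ P.getLast?, ∀ q ∈ Q.head?, NC p q) := by
  intro n
  induction n with
  | zero =>
    intro L1 L2 hlen h1 h2
    rw [Nat.le_zero, List.length_eq_zero_iff] at hlen
    subst hlen
    exact ⟨[], [], L2, by simp, by simp [invRev], by simpa using reduce_eq_self_of_chain' h2,
      by simp⟩
  | succ n ih =>
  intro L1 L2 hlen h1 h2
  rcases L1.eq_nil_or_concat with rfl | ⟨L1', x, rfl⟩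
  · exact ⟨[], [], L2, by simp, by simp [invRev], by simpa using reduce_eq_self_of_chain' h2,
      by simp⟩
  rw [List.concat_eq_append] at *
  rcases L2 with _ | ⟨y, L2'⟩
  · exact ⟨L1' ++ [x], [], [], by simp, by simp [invRev], by simpa using reduce_eq_self_of_chain' h1,
      by simp⟩
  by_cases hy : y = invL x
  · -- cancellation step
    subst hy
    have hstep : reduce ((L1' ++ [x]) ++ (invL x :: L2')) = reduce (L1' ++ L2') := by
      have : Red.Step (L1' ++ (x.1, x.2) :: (x.1, !x.2) :: L2') (L1' ++ L2') := Red.Step.not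
      have e : (L1' ++ [x]) ++ (invL x :: L2') = L1' ++ (x.1, x.2) :: (x.1, !x.2) :: L2' := by
        simp [invL]
      rw [e]
      exact reduce.Step.eq this
    have h1' : List.IsChain NC L1' := h1.prefix (L1'.prefix_append [x])
    have h2' : List.IsChain NC L2' := h2.tail
    have hlen' : L1'.length ≤ n := by
      simp only [List.length_append, List.length_cons, List.length_nil] at hlen
      omega
    obtain ⟨P, C, Q, e1, e2, e3, hj⟩ := ih L1' L2' hlen' h1' h2'
    refine ⟨P, C ++ [x], Q, by rw [← List.append_assoc, ← e1], ?_, by rw [hstep, ← e3, e1], hj⟩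
    have : invRev (C ++ [x]) = invL x :: invRev C := by
      simp [invRev, invL]
    rw [this]
    simp [e2]
  · -- no cancellation
    refine ⟨L1' ++ [x], [], y :: L2', by simp, by simp [invRev], ?_, ?_⟩
    · apply reduce_eq_self_of_chain'
      rw [List.isChain_append]
      refine ⟨h1, h2, ?_⟩
      intro p hp q hq
      rw [List.getLast?_concat] at hp
      simp only [List.head?_cons, Option.mem_def, Option.some.injEq] at hp hq
      subst hp; subst hq
      exact hy
    · intro p hp q hq
      rw [List.getLast?_concat] at hp
      simp only [List.head?_cons, Option.mem_def, Option.some.injEq] at hp hq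
      subst hp; subst hq
      exact hy

lemma structure_lemma {k : ℕ} (L1 L2 : List (Letter k)) (h1 : List.IsChain NC L1)
    (h2 : List.IsChain NC L2) :
    ∃ P C Q : List (Letter k), L1 = P ++ C ∧ L2 = invRev C ++ Q ∧
      reduce (L1 ++ L2) = P ++ Q ∧
      (∀ p ∈ P.getLast?, ∀ q ∈ Q.head?, NC p q) :=
  structure_aux L1.length L1 L2 le_rfl h1 h2

noncomputable def Ssum {k : ℕ} (u L : List (Letter k)) : ℝ :=
  ((L.zip L.tail).map (fun p => wtc u p.1 p.2)).sum

lemma sum_count {k : ℕ} (Z : List (Letter k × Letter k)) (c : Fin k → Fin k → ℝ) (s t : Bool) :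
    (∑ a : Fin k, ∑ b : Fin k, c a b * (Z.count ((a,s),(b,t)) : ℝ))
      = (Z.map (fun p => if p.1.2 = s ∧ p.2.2 = t then c p.1.1 p.2.1 else 0)).sum := by
  induction Z with
  | nil => simp
  | cons p Z ihz =>
    obtain ⟨⟨p1, p2⟩, ⟨p3, p4⟩⟩ := p
    simp only [List.count_cons, List.map_cons, List.sum_cons, beq_iff_eq]
    push_cast
    simp only [mul_add, Finset.sum_add_distrib, ihz]
    rw [add_comm]
    congr 1
    have hc : ∀ a b : Fin k, ((((p1, p2), (p3, p4)) : Letter k × Letter k) = ((a, s), (b, t)))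
        ↔ (p1 = a ∧ p2 = s ∧ p3 = b ∧ p4 = t) := by
      intro a b; simp [Prod.ext_iff, and_assoc]
    simp only [eq_iff_iff.2 (hc _ _)]
    by_cases hs : p2 = s <;> by_cases ht : p4 = t
    · subst hs; subst ht
      simp only [and_true, true_and, mul_ite, mul_one, mul_zero, ite_and]
      simp [Finset.sum_ite_eq]
    · simp [hs, ht]
    · simp [hs, ht]
    · simp [hs, ht]

lemma map_sum_combine {α : Type*} (f1 f2 f3 f4 g : α → ℝ)
    (h : ∀ p, (f1 p - f2 p) + (f3 p - f4 p) = g p) (Z : List α) :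
    ((Z.map f1).sum - (Z.map f2).sum) + ((Z.map f3).sum - (Z.map f4).sum) = (Z.map g).sum := by
  induction Z with
  | nil => simp
  | cons p Z ihz =>
    simp only [List.map_cons, List.sum_cons]
    have := h p
    linarith

lemma alphaW_add_betaW {k : ℕ} (u L : List (Letter k)) :
    alphaW u L + betaW u L = Ssum u L := by
  classical
  set Z := L.zip L.tail with hZ
  have h1 : (∑ a : Fin k, ∑ b : Fin k,
      if leftOf u (a, false) (b, false) then (cnt L (a, true) (b, false) : ℝ) else 0)
      = (Z.map (fun p => if p.1.2 = true ∧ p.2.2 = false then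
          (if leftOf u (p.1.1, false) (p.2.1, false) then (1:ℝ) else 0) else 0)).sum := by
    rw [← sum_count Z (fun a b => if leftOf u (a, false) (b, false) then (1:ℝ) else 0) true false]
    simp [cnt, ite_mul, hZ]
  have h2 : (∑ a : Fin k, ∑ b : Fin k,
      if leftOf u (a, true) (b, true) then (cnt L (b, false) (a, true) : ℝ) else 0)
      = (Z.map (fun p => if p.1.2 = false ∧ p.2.2 = true then
          (if leftOf u (p.2.1, true) (p.1.1, true) then (1:ℝ) else 0) else 0)).sum := by
    rw [← sum_count Z (fun a b => if leftOf u (b, true) (a, true) then (1:ℝ) else 0) false true]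
    rw [Finset.sum_comm]
    simp [cnt, ite_mul, hZ]
  have h3 : (∑ a : Fin k, ∑ b : Fin k,
      if leftOf u (a, false) (b, true) then (cnt L (a, true) (b, true) : ℝ) else 0)
      = (Z.map (fun p => if p.1.2 = true ∧ p.2.2 = true then
          (if leftOf u (p.1.1, false) (p.2.1, true) then (1:ℝ) else 0) else 0)).sum := by
    rw [← sum_count Z (fun a b => if leftOf u (a, false) (b, true) then (1:ℝ) else 0) true true]
    simp [cnt, ite_mul, hZ]
  have h4 : (∑ a : Fin k, ∑ b : Fin k,
      if leftOf u (a, false) (b, true) then (cnt L (b, false) (a, false) : ℝ) else 0)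
      = (Z.map (fun p => if p.1.2 = false ∧ p.2.2 = false then
          (if leftOf u (p.2.1, false) (p.1.1, true) then (1:ℝ) else 0) else 0)).sum := by
    rw [← sum_count Z (fun a b => if leftOf u (b, false) (a, true) then (1:ℝ) else 0) false false]
    rw [Finset.sum_comm]
    simp [cnt, ite_mul, hZ]
  rw [alphaW, betaW, h1, h2, h3, h4, Ssum, ← hZ]
  apply map_sum_combine
  rintro ⟨⟨m, s⟩, ⟨n, t⟩⟩
  cases s <;> cases t <;> simp [wtc] <;> split_ifs <;> norm_num

noncomputable def omega1 {k : ℕ} (x : Letter k) : ℝ := if x.2 then 1 / 2 else -(1 / 2)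

noncomputable def hW {k : ℕ} (L : List (Letter k)) : ℝ :=
  match L.head? with
  | none => 0
  | some x => omega1 x

@[simp] lemma omegaW_nil {k : ℕ} : omegaW ([] : List (Letter k)) = 0 := rfl

lemma omegaW_concat {k : ℕ} (M : List (Letter k)) (p : Letter k) :
    omegaW (M ++ [p]) = omega1 p := by
  simp [omegaW, List.getLast?_concat, omega1]

lemma omegaW_append_cons {k : ℕ} (M Q : List (Letter k)) (q : Letter k) :
    omegaW (M ++ q :: Q) = omegaW (q :: Q) := by
  rcases (q :: Q).eq_nil_or_concat with h | ⟨Q', p, h⟩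
  · simp at h
  · rw [List.concat_eq_append] at h
    rw [h, ← List.append_assoc, omegaW_concat, omegaW_concat]

@[simp] lemma hW_cons {k : ℕ} (x : Letter k) (M : List (Letter k)) :
    hW (x :: M) = omega1 x := rfl

@[simp] lemma hW_nil {k : ℕ} : hW ([] : List (Letter k)) = 0 := rfl

lemma omega1_invL {k : ℕ} (x : Letter k) : omega1 (invL x) = -omega1 x := by
  obtain ⟨a, s⟩ := x; cases s <;> simp [omega1, invL]

lemma omegaW_invRev {k : ℕ} (C : List (Letter k)) : omegaW (invRev C) = -(hW C) := by
  rcases C with _ | ⟨c, C'⟩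
  · simp [invRev]
  · rw [_root_.invRev_cons, omegaW_concat, omega1_invL, hW_cons]

@[simp] lemma Ssum_nil {k : ℕ} (u : List (Letter k)) : Ssum u [] = 0 := rfl
@[simp] lemma Ssum_single {k : ℕ} (u : List (Letter k)) (x : Letter k) :
    Ssum u [x] = 0 := rfl

lemma Ssum_cons2 {k : ℕ} (u : List (Letter k)) (x y : Letter k) (t : List (Letter k)) :
    Ssum u (x :: y :: t) = wtc u x y + Ssum u (y :: t) := by
  simp [Ssum]

lemma Ssum_append {k : ℕ} (u : List (Letter k)) :
    ∀ (P' : List (Letter k)) (p q : Letter k) (Q' : List (Letter k)),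
    Ssum u ((P' ++ [p]) ++ q :: Q') =
      Ssum u (P' ++ [p]) + wtc u p q + Ssum u (q :: Q') := by
  intro P'
  induction P' with
  | nil => intro p q Q'; simp [Ssum_cons2]
  | cons a P'' ih =>
    intro p q Q'
    rcases P'' with _ | ⟨b, P3⟩
    · simp only [List.nil_append, List.cons_append, List.singleton_append]
      rw [Ssum_cons2, Ssum_cons2]
      rw [show Ssum u [a, p] = wtc u a p + Ssum u [p] from Ssum_cons2 u a p []]
      simp [add_assoc]
    · have e1 : ((a :: b :: P3) ++ [p]) ++ q :: Q' = a :: (((b :: P3) ++ [p]) ++ q :: Q') := by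
        simp
      have e2 : ((b :: P3) ++ [p]) ++ q :: Q' = b :: ((P3 ++ [p]) ++ q :: Q') := by simp
      have e3 : (a :: b :: P3) ++ [p] = a :: b :: (P3 ++ [p]) := by simp
      rw [e1, e2, Ssum_cons2, ← e2, ih, e3, Ssum_cons2]
      have e4 : (b :: P3) ++ [p] = b :: (P3 ++ [p]) := by simp
      rw [e4]
      ring

-- order facts
lemma indexOf_inj' {k : ℕ} {l : List (Letter k)} {x y : Letter k} (hx : x ∈ l)
    (h : l.idxOf x = l.idxOf y) : x = y := by
  induction l with
  | nil => simp at hx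
  | cons a l ih =>
    rw [List.idxOf_cons, List.idxOf_cons] at h
    by_cases h1 : a == x <;> by_cases h2 : a == y
    · exact (eq_of_beq h1).symm.trans (eq_of_beq h2)
    · rw [Bool.not_eq_true] at h2; rw [h1, h2] at h; simp at h
    · rw [Bool.not_eq_true] at h1; rw [h1, h2] at h; simp at h
    · rw [Bool.not_eq_true] at h1 h2; rw [h1, h2] at h
      simp only [cond_false] at h
      have h' : List.idxOf x l = List.idxOf y l := by omega
      rcases List.mem_cons.1 hx with rfl | hx'
      · simp at h1
      · exact ih hx' h'

lemma leftOf_total {k : ℕ} {u : List (Letter k)} (hu : IsOriented u) {x y : Letter k}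
    (hxy : x ≠ y) : leftOf u x y ∨ leftOf u y x := by
  rcases Nat.lt_trichotomy (u.idxOf x) (u.idxOf y) with h1 | h1 | h1
  · exact Or.inl h1
  · exact absurd (indexOf_inj' (hu.2 x) h1) hxy
  · exact Or.inr h1

lemma leftOf_asymm {k : ℕ} {u : List (Letter k)} {x y : Letter k}
    (h : leftOf u x y) : ¬ leftOf u y x := by
  unfold leftOf at *; omega

lemma indexOf_ne {k : ℕ} {u : List (Letter k)} (hu : IsOriented u) {x y : Letter k}
    (hxy : x ≠ y) : u.idxOf x ≠ u.idxOf y :=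
  fun h => hxy (indexOf_inj' (hu.2 x) h)

lemma wtc_invL {k : ℕ} {u : List (Letter k)} (hu : IsOriented u) {x y : Letter k}
    (h : NC x y) :
    wtc u x y + wtc u (invL y) (invL x) = omega1 x - omega1 y := by
  obtain ⟨a, s⟩ := x; obtain ⟨b, t⟩ := y
  cases s <;> cases t
  · -- s = false, t = false
    by_cases hP : leftOf u ((b, false) : Letter k) ((a, true) : Letter k) <;>
      simp [wtc, invL, omega1, hP] <;> norm_num
  · -- s = false, t = true : need a ≠ b
    have hab : ((b, true) : Letter k) ≠ (a, true) := by
      simpa [NC, invL] using h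
    rcases leftOf_total hu hab with h1 | h1 <;>
      simp [wtc, invL, omega1, h1, leftOf_asymm h1] <;> norm_num
  · -- s = true, t = false : need a ≠ b
    have hab : ((b, false) : Letter k) ≠ (a, false) := by
      simpa [NC, invL] using h
    rcases leftOf_total hu hab.symm with h1 | h1 <;>
      simp [wtc, invL, omega1, h1, leftOf_asymm h1] <;> norm_num
  · -- s = true, t = true
    by_cases hP : leftOf u ((a, false) : Letter k) ((b, true) : Letter k) <;>
      simp [wtc, invL, omega1, hP] <;> norm_num

lemma tele {k : ℕ} {u : List (Letter k)} (hu : IsOriented u) :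
    ∀ (C : List (Letter k)), List.IsChain NC C →
      Ssum u C + Ssum u (invRev C) = hW C - omegaW C := by
  intro C
  induction C with
  | nil => simp [invRev]
  | cons x C ihc =>
    intro hch
    rcases C with _ | ⟨y, t⟩
    · rw [_root_.invRev_cons]
      have h1 : omegaW [x] = omega1 x := omegaW_concat [] x
      simp [omegaW_concat, omega1_invL, invRev, h1]
    · have hnc : NC x y := List.isChain_cons_cons.1 hch |>.1
      have ih := ihc hch.tail
      rw [Ssum_cons2, _root_.invRev_cons, _root_.invRev_cons]
      rw [Ssum_append u (invRev t) (invL y) (invL x) []]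
      rw [← _root_.invRev_cons]
      have hwx := wtc_invL hu hnc
      have homega : omegaW (x :: y :: t) = omegaW (y :: t) :=
        omegaW_append_cons [x] t y
      rw [homega, hW_cons]
      rw [hW_cons] at ih
      simp only [Ssum_single]
      linarith

lemma abs_half {r : ℝ} (h : r = 1/2 ∨ r = -(1/2)) : |r| = 1/2 := by
  rcases h with rfl | rfl
  · rw [abs_of_nonneg] <;> norm_num
  · rw [abs_of_nonpos] <;> norm_num

lemma fLem {k : ℕ} {u : List (Letter k)} (hu : IsOriented u) {x y z : Letter k}
    (hxz : x ≠ z) (hyz : y ≠ z) (hxy : x ≠ y) :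
    (if leftOf u x z then (1:ℝ) else 0) - (if leftOf u y z then (1:ℝ) else 0)
      - (if leftOf u x y then (1:ℝ) else 0) = 0 ∨
    (if leftOf u x z then (1:ℝ) else 0) - (if leftOf u y z then (1:ℝ) else 0)
      - (if leftOf u x y then (1:ℝ) else 0) = -1 := by
  have d1 := indexOf_ne hu hxz
  have d2 := indexOf_ne hu hyz
  have d3 := indexOf_ne hu hxy
  split_ifs <;> first | (left; norm_num; done) | (right; norm_num; done) |
    (exfalso; unfold leftOf at *; omega)

lemma negite (P : Prop) [Decidable P] : (if P then (-1:ℝ) else 0) = -(if P then 1 else 0) := by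
  split_ifs <;> norm_num

/-- degenerate local lemma -/
lemma localA {k : ℕ} (u : List (Letter k)) (p q : Letter k) :
    |omega1 p - wtc u p q| = 1/2 := by
  apply abs_half
  obtain ⟨a, s⟩ := p
  cases s <;> simp only [wtc, omega1] <;> split_ifs <;>
    first | (left; norm_num; done) | (right; norm_num; done)

/-- core local lemma -/
lemma localC {k : ℕ} {u : List (Letter k)} (hu : IsOriented u) {p c q : Letter k}
    (hcp : c ≠ invL p) (hqc : q ≠ c) (hqp : q ≠ invL p) :
    |wtc u p c + wtc u (invL c) q - wtc u p q + omega1 c| = 1/2 := by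
  apply abs_half
  obtain ⟨a, sp⟩ := p; obtain ⟨m, sc⟩ := c
  cases sp <;> cases sc
  · -- sp = false, sc = false : x=c, y=q, z=(a,true)
    simp only [invL, Bool.not_false] at hcp hqp ⊢
    simp only [wtc, invL, omega1]
    norm_num [negite]
    rcases fLem hu (x := ((m, false) : Letter k)) (y := q) (z := ((a, true) : Letter k))
      hcp hqp (Ne.symm hqc) with hE | hE <;>
      first | (left; linarith) | (right; linarith)
  · -- sp = false, sc = true : x=q, y=c=(m,true), z=(a,true)
    simp only [invL, Bool.not_false, Bool.not_true] at hcp hqp ⊢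
    simp only [wtc, invL, omega1]
    norm_num [negite]
    rcases fLem hu (x := q) (y := ((m, true) : Letter k)) (z := ((a, true) : Letter k))
      hqp hcp hqc with hE | hE <;>
      first | (left; linarith) | (right; linarith)
  · -- sp = true, sc = false : x=(a,false), y=c, z=q
    simp only [invL, Bool.not_true, Bool.not_false] at hcp hqp ⊢
    simp only [wtc, invL, omega1]
    norm_num [negite]
    rcases fLem hu (x := ((a, false) : Letter k)) (y := ((m, false) : Letter k)) (z := q)
      (Ne.symm hqp) (Ne.symm hqc) (Ne.symm hcp) with hE | hE <;>
      first | (left; linarith) | (right; linarith)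
  · -- sp = true, sc = true : x=(a,false), y=q, z=(m,true)
    simp only [invL, Bool.not_true] at hcp hqp ⊢
    simp only [wtc, invL, omega1]
    norm_num [negite]
    have hxz : ((a, false) : Letter k) ≠ (m, true) := by simp
    rcases fLem hu (x := ((a, false) : Letter k)) (y := q) (z := ((m, true) : Letter k))
      hxz hqc (Ne.symm hqp) with hE | hE <;>
      first | (left; linarith) | (right; linarith)


lemma tau_eq {k : ℕ} (u : List (Letter k)) (g : FreeGroup (Fin k)) :
    tau u g = Ssum u g.toWord + omegaW g.toWord := by
  rw [tau, alphaW_add_betaW]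

lemma tau_one {k : ℕ} (u : List (Letter k)) : tau u (1 : FreeGroup (Fin k)) = 0 := by
  rw [tau_eq, toWord_one]; simp

lemma tau_inv {k : ℕ} {u : List (Letter k)} (hu : IsOriented u) (g : FreeGroup (Fin k)) :
    tau u g⁻¹ = -tau u g := by
  rw [tau_eq, tau_eq, toWord_inv]
  have ht := tele hu g.toWord (chain'_toWord g)
  have ho := omegaW_invRev g.toWord
  linarith

lemma localB {k : ℕ} (u : List (Letter k)) (c q : Letter k) :
    |omega1 c + wtc u (invL c) q| = 1/2 := by
  have h := localA u (invL c) q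
  rw [omega1_invL] at h
  rw [show omega1 c + wtc u (invL c) q = -(-omega1 c - wtc u (invL c) q) from by ring, abs_neg]
  exact h

lemma defect_eq {k : ℕ} {u : List (Letter k)} (hu : IsOriented u)
    (g h : FreeGroup (Fin k)) (hg : g ≠ 1) (hh : h ≠ 1) (hgh : g * h ≠ 1) :
    |tau u g + tau u h - tau u (g * h)| = 1/2 := by
  have h1 := chain'_toWord g
  have h2 := chain'_toWord h
  obtain ⟨P, C, Q, e1, e2, e3, hj⟩ := structure_lemma g.toWord h.toWord h1 h2
  have egh : (g * h).toWord = P ++ Q := by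
    conv_lhs => rw [show g * h = mk g.toWord * mk h.toWord from by rw [mk_toWord, mk_toWord]]
    rw [mul_mk, toWord_mk, e3]
  have hG : g.toWord ≠ [] := fun hn => hg (toWord_eq_nil_iff.1 hn)
  have hH : h.toWord ≠ [] := fun hn => hh (toWord_eq_nil_iff.1 hn)
  have hPQ : P ++ Q ≠ [] := fun hn => hgh (toWord_eq_nil_iff.1 (egh.trans hn))
  have h1' : List.IsChain NC (P ++ C) := e1 ▸ h1
  have h2' : List.IsChain NC (invRev C ++ Q) := e2 ▸ h2
  have hG' : P ++ C ≠ [] := e1 ▸ hG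
  have hH' : invRev C ++ Q ≠ [] := e2 ▸ hH
  rw [tau_eq, tau_eq, tau_eq, egh, e1, e2]
  rcases C with _ | ⟨c, C''⟩
  · -- no cancellation
    have hP : P ≠ [] := by simpa using hG'
    have hQ : Q ≠ [] := by simpa [invRev] using hH'
    rcases P.eq_nil_or_concat with rfl | ⟨P', p, rfl⟩
    · exact absurd rfl hP
    rcases Q with _ | ⟨q, Q'⟩
    · exact absurd rfl hQ
    rw [List.concat_eq_append] at hP
    simp only [List.concat_eq_append, List.append_nil, invRev_empty, List.nil_append]
    have key : (Ssum u (P' ++ [p]) + omegaW (P' ++ [p]))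
        + (Ssum u (q :: Q') + omegaW (q :: Q'))
        - (Ssum u ((P' ++ [p]) ++ q :: Q') + omegaW ((P' ++ [p]) ++ q :: Q'))
        = omega1 p - wtc u p q := by
      rw [Ssum_append u P' p q Q', omegaW_append_cons (P' ++ [p]) Q' q, omegaW_concat]
      ring
    rw [key]
    exact localA u p q
  · -- cancellation, C = c :: C''
    have hCch : List.IsChain NC (c :: C'') := h1'.suffix (List.suffix_append P _)
    have htele := tele hu (c :: C'') hCch
    rw [hW_cons] at htele
    have hIRC : invRev (c :: C'') = invRev C'' ++ [invL c] := invRev_cons c C''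
    rcases P.eq_nil_or_concat with rfl | ⟨P', p, rfl⟩
    · -- P = []
      rcases Q with _ | ⟨q, Q'⟩
      · exact absurd rfl hPQ
      have key : (Ssum u ([] ++ c :: C'') + omegaW ([] ++ c :: C''))
          + (Ssum u (invRev (c :: C'') ++ q :: Q') + omegaW (invRev (c :: C'') ++ q :: Q'))
          - (Ssum u ([] ++ q :: Q') + omegaW ([] ++ q :: Q'))
          = omega1 c + wtc u (invL c) q := by
        rw [hIRC, Ssum_append u (invRev C'') (invL c) q Q', ← hIRC,
          omegaW_append_cons (invRev (c :: C'')) Q' q]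
        simp only [List.nil_append]
        linarith
      rw [key]
      exact localB u c q
    · rw [List.concat_eq_append] at *
      have hpc : NC p c := by
        obtain ⟨-, -, hj'⟩ := List.isChain_append.1 h1'
        exact hj' p (by rw [List.getLast?_concat]; rfl) c rfl
      rcases Q with _ | ⟨q, Q'⟩
      · -- Q = []
        have key : (Ssum u ((P' ++ [p]) ++ c :: C'') + omegaW ((P' ++ [p]) ++ c :: C''))
            + (Ssum u (invRev (c :: C'') ++ []) + omegaW (invRev (c :: C'') ++ []))
            - (Ssum u ((P' ++ [p]) ++ []) + omegaW ((P' ++ [p]) ++ []))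
            = wtc u p c - omega1 p := by
          rw [Ssum_append u P' p c C'', omegaW_append_cons (P' ++ [p]) C'' c,
            List.append_nil, List.append_nil, omegaW_invRev (c :: C''), hW_cons,
            omegaW_concat P' p]
          linarith
        rw [key, abs_sub_comm]
        exact localA u p c
      · -- full case
        have hqc : q ≠ c := by
          obtain ⟨-, -, hj'⟩ := List.isChain_append.1 h2'
          have := hj' (invL c) (by rw [hIRC, List.getLast?_concat]; rfl) q rfl
          rwa [NC, invL_invL] at this
        have hqp : q ≠ invL p := hj p (by rw [List.getLast?_concat]; rfl) q rfl
        have key : (Ssum u ((P' ++ [p]) ++ c :: C'') + omegaW ((P' ++ [p]) ++ c :: C''))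
            + (Ssum u (invRev (c :: C'') ++ q :: Q') + omegaW (invRev (c :: C'') ++ q :: Q'))
            - (Ssum u ((P' ++ [p]) ++ q :: Q') + omegaW ((P' ++ [p]) ++ q :: Q'))
            = wtc u p c + wtc u (invL c) q - wtc u p q + omega1 c := by
          rw [Ssum_append u P' p c C'', omegaW_append_cons (P' ++ [p]) C'' c,
            hIRC, Ssum_append u (invRev C'') (invL c) q Q', ← hIRC,
            omegaW_append_cons (invRev (c :: C'')) Q' q,
            Ssum_append u P' p q Q', omegaW_append_cons (P' ++ [p]) Q' q]
          linarith
        rw [key]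
        exact localC hu (fun he => hpc he) hqc hqp

theorem stmt3 {k : ℕ} (hk : 2 ≤ k) (u : List (Letter k)) (hu : IsOriented u) :
    (∀ g h : FreeGroup (Fin k),
      |tau u g + tau u h - tau u (g * h)| =
        if g = 1 ∨ h = 1 ∨ g * h = 1 then 0 else 1 / 2)
    ∧ IsGreatest
        {d : ℝ | ∃ g h : FreeGroup (Fin k), d = |tau u g + tau u h - tau u (g * h)|}
        (1 / 2) := by
  have main : ∀ g h : FreeGroup (Fin k),
      |tau u g + tau u h - tau u (g * h)| =
        if g = 1 ∨ h = 1 ∨ g * h = 1 then 0 else 1 / 2 := by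
    intro g h
    by_cases hg : g = 1
    · subst hg
      rw [if_pos (Or.inl rfl), one_mul, tau_one]
      simp
    by_cases hh : h = 1
    · subst hh
      rw [if_pos (Or.inr (Or.inl rfl)), mul_one, tau_one]
      simp
    by_cases hgh : g * h = 1
    · rw [if_pos (Or.inr (Or.inr hgh))]
      have hh' : h = g⁻¹ := eq_inv_of_mul_eq_one_right hgh
      subst hh'
      rw [hgh, tau_inv hu, tau_one]
      simp
    · rw [if_neg (by simp [hg, hh, hgh])]
      exact defect_eq hu g h hg hh hgh
  refine ⟨main, ?_, ?_⟩
  · have hx : (0 : ℕ) < k := by omega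
    set x : Fin k := ⟨0, hx⟩
    refine ⟨of x, of x, ?_⟩
    rw [main]
    rw [if_neg]
    push_neg
    refine ⟨of_ne_one x, of_ne_one x, ?_⟩
    intro hcon
    have h2 : of x * of x = of x ^ 2 := (sq (of x)).symm
    rw [h2] at hcon
    have := FreeGroup.norm_of_pow x 2
    rw [hcon, FreeGroup.norm_one] at this
    omega
  · rintro d ⟨g, h, rfl⟩
    rw [main]
    split_ifs <;> norm_num
end

section
/- Let u be an oriented word of rank k ≥ 2, let x and y be two distinct letters in A ∪ A^{-1}, and let f and g be nontrivial reduced words ending in x and y respectively. Then τ_u(fg^{-1}) − τ_u(f) − τ_u(g^{-1}) = 1/2 if x^{-1} occurs to the left of y^{-1} in u, and −1/2 if y^{-1} occurs to the left of x^{-1} in u. -/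
open FreeGroup

section Aux
variable {k : ℕ}


/-- Reducedness as a chain condition. -/
def RedW {α : Type*} (L : List (α × Bool)) : Prop :=
  List.IsChain (fun p q => ¬(p.1 = q.1 ∧ p.2 = !q.2)) L

theorem reduce_eq_self_of_redW {α : Type*} [DecidableEq α] (L : List (α × Bool))
    (h : RedW L) : reduce L = L := by
  induction L with
  | nil => rfl
  | cons p L ih =>
    rcases L with _ | ⟨q, L'⟩
    · rfl
    · have h2 : RedW (q :: L') := (List.isChain_cons_cons.mp h).2
      have h1 : ¬(p.1 = q.1 ∧ p.2 = !q.2) := (List.isChain_cons_cons.mp h).1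
      rw [reduce.cons, ih h2]
      simp [h1]

theorem exists_decomp_of_not_redW {α : Type*} (M : List (α × Bool)) (h : ¬ RedW M) :
    ∃ (L₂ L₃ : List (α × Bool)) (x : α) (b : Bool), M = L₂ ++ (x, b) :: (x, !b) :: L₃ := by
  induction M with
  | nil => exact absurd List.isChain_nil h
  | cons p L ih =>
    rcases L with _ | ⟨q, L'⟩
    · exact absurd (List.isChain_singleton p) h
    · rw [RedW, List.isChain_cons_cons] at h
      by_cases h1 : ¬(p.1 = q.1 ∧ p.2 = !q.2)
      · have h2 : ¬ RedW (q :: L') := by tauto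
        obtain ⟨L₂, L₃, x, b, hx⟩ := ih h2
        exact ⟨p :: L₂, L₃, x, b, by rw [hx]; rfl⟩
      · push_neg at h1
        obtain ⟨e1, e2⟩ := h1
        refine ⟨[], L', p.1, p.2, ?_⟩
        have : q = (p.1, !p.2) := by
          have h2 : q.2 = !p.2 := by cases hq : q.2 <;> simp [hq] at e2 ⊢ <;> simp [e2]
          exact Prod.ext e1.symm h2
        simp [this]

theorem redW_reduce {α : Type*} [DecidableEq α] (L : List (α × Bool)) : RedW (reduce L) := by
  by_contra h
  obtain ⟨L₂, L₃, x, b, hx⟩ := exists_decomp_of_not_redW _ h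
  exact reduce.not hx

theorem redW_toWord {α : Type*} [DecidableEq α] (f : FreeGroup α) : RedW f.toWord := by
  rw [← reduce_toWord]; exact redW_reduce _

theorem zip_tail_append {α : Type*} (A B : List α) (a b : α)
    (hA : A.getLast? = some a) (hB : B.head? = some b) :
    (A ++ B).zip (A ++ B).tail = A.zip A.tail ++ (a, b) :: B.zip B.tail := by
  induction A with
  | nil => simp at hA
  | cons a1 A' ih =>
    rcases A' with _ | ⟨a2, A''⟩
    · obtain ⟨b2, B', rfl⟩ : ∃ b2 B', B = b2 :: B' := by
        cases B with
        | nil => simp at hB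
        | cons b2 B' => exact ⟨b2, B', rfl⟩
      simp only [List.getLast?_singleton, Option.some.injEq] at hA
      simp only [List.head?_cons, Option.some.injEq] at hB
      subst hA; subst hB
      simp
    · have hA' : (a2 :: A'').getLast? = some a := by
        rw [List.getLast?_cons_cons] at hA; exact hA
      have := ih hA'
      simp only [List.cons_append, List.tail_cons, List.zip_cons_cons] at this ⊢
      rw [this]

theorem cnt_append (A B : List (Letter k)) (a b : Letter k)
    (hA : A.getLast? = some a) (hB : B.head? = some b) (p q : Letter k) :
    cnt (A ++ B) p q = cnt A p q + cnt B p q + cnt [a, b] p q := by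
  unfold cnt
  rw [zip_tail_append A B a b hA hB]
  simp [List.count_append, List.count_cons]
  omega


theorem cnt_pair_real (x y p q : Letter k) :
    (cnt [x, y] p q : ℝ) = if p = x ∧ q = y then 1 else 0 := by
  have : cnt [x, y] p q = if p = x ∧ q = y then 1 else 0 := by
    simp only [cnt, List.tail_cons, List.zip_cons_cons, List.zip_nil_left,
      List.count_cons, List.count_nil]
    by_cases h : p = x ∧ q = y
    · obtain ⟨rfl, rfl⟩ := h; simp
    · rw [if_neg h]
      have : ¬ ((x, y) = (p, q)) := by
        rintro he; exact h ⟨(Prod.ext_iff.mp he).1.symm, (Prod.ext_iff.mp he).2.symm⟩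
      simp [this]
  rw [this]; split_ifs <;> simp

theorem key (u : List (Letter k)) (x y : Letter k) (s t : Bool)
    (P : Fin k → Fin k → Prop) [∀ a b, Decidable (P a b)] :
    (∑ a : Fin k, ∑ b : Fin k, if P a b then (cnt [x, y] (a, s) (b, t) : ℝ) else 0)
      = if s = x.2 ∧ t = y.2 ∧ P x.1 y.1 then 1 else 0 := by
  have h1 : ∀ a : Fin k,
      (∑ b : Fin k, if P a b then (cnt [x, y] (a, s) (b, t) : ℝ) else 0)
        = if (a, s) = x ∧ t = y.2 ∧ P a y.1 then 1 else 0 := by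
    intro a
    simp only [cnt_pair_real]
    rw [Finset.sum_eq_single y.1]
    · split_ifs <;> simp_all [Prod.ext_iff]
    · intro b _ hb; split_ifs <;> simp_all [Prod.ext_iff]
    · intro h; exact absurd (Finset.mem_univ _) h
  simp only [h1]
  rw [Finset.sum_eq_single x.1]
  · split_ifs <;> simp_all [Prod.ext_iff]
  · intro a _ ha; split_ifs <;> simp_all [Prod.ext_iff]
  · intro h; exact absurd (Finset.mem_univ _) h

theorem key2 (u : List (Letter k)) (x y : Letter k) (s t : Bool)
    (P : Fin k → Fin k → Prop) [∀ a b, Decidable (P a b)] :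
    (∑ a : Fin k, ∑ b : Fin k, if P a b then (cnt [x, y] (b, s) (a, t) : ℝ) else 0)
      = if s = x.2 ∧ t = y.2 ∧ P y.1 x.1 then 1 else 0 := by
  rw [Finset.sum_comm]
  exact key u x y s t (fun a b => P b a)

theorem indexOf_inj'_s5 {α : Type*} [BEq α] [LawfulBEq α] :
    ∀ {l : List α} {a b : α}, a ∈ l → b ∈ l → List.idxOf a l = List.idxOf b l → a = b := by
  intro l
  induction l with
  | nil => intro a b ha _ _; simp at ha
  | cons c l ih =>
    intro a b ha hb h
    rw [List.idxOf_cons, List.idxOf_cons] at h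
    by_cases hac : c = a <;> by_cases hbc : c = b
    · rw [← hac, ← hbc]
    · have hab : (a == b) = false := beq_eq_false_iff_ne.mpr (fun e => hbc (hac.trans e))
      rw [show (c == a) = true from beq_iff_eq.mpr hac,
        show (c == b) = false from beq_eq_false_iff_ne.mpr hbc, cond_true, cond_false] at h
      simp at h
    · have hba : (b == a) = false := beq_eq_false_iff_ne.mpr (fun e => hac (hbc.trans e))
      rw [show (c == b) = true from beq_iff_eq.mpr hbc,
        show (c == a) = false from beq_eq_false_iff_ne.mpr hac, cond_true, cond_false] at h
      simp at h
    · rw [show (c == a) = false from beq_eq_false_iff_ne.mpr hac,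
        show (c == b) = false from beq_eq_false_iff_ne.mpr hbc, cond_false, cond_false] at h
      simp only [Nat.add_right_cancel_iff] at h
      have ha' : a ∈ l := by
        rcases List.mem_cons.mp ha with rfl | h'
        · exact absurd rfl hac
        · exact h'
      have hb' : b ∈ l := by
        rcases List.mem_cons.mp hb with rfl | h'
        · exact absurd rfl hbc
        · exact h'
      exact ih ha' hb' h

theorem ite_add3 (P : Prop) [Decidable P] (r1 r2 r3 : ℝ) :
    (if P then r1 + r2 + r3 else 0)
      = (if P then r1 else 0) + (if P then r2 else 0) + (if P then r3 else 0) := by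
  split_ifs <;> simp

theorem alphaW_append (u A B : List (Letter k)) (a b : Letter k)
    (hA : A.getLast? = some a) (hB : B.head? = some b) :
    alphaW u (A ++ B) = alphaW u A + alphaW u B + alphaW u [a, b] := by
  unfold alphaW
  simp only [cnt_append A B a b hA hB, Nat.cast_add, ite_add3, Finset.sum_add_distrib]
  ring

theorem betaW_append (u A B : List (Letter k)) (a b : Letter k)
    (hA : A.getLast? = some a) (hB : B.head? = some b) :
    betaW u (A ++ B) = betaW u A + betaW u B + betaW u [a, b] := by
  unfold betaW
  simp only [cnt_append A B a b hA hB, Nat.cast_add, ite_add3, Finset.sum_add_distrib]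
  ring

end Aux

theorem stmt5 {k : ℕ} (hk : 2 ≤ k) (u : List (Letter k)) (hu : IsOriented u)
    (x y : Letter k) (hxy : x ≠ y) (f g : FreeGroup (Fin k))
    (hf : f ≠ 1) (hg : g ≠ 1)
    (hfx : f.toWord.getLast? = some x) (hgy : g.toWord.getLast? = some y) :
    tau u (f * g⁻¹) - tau u f - tau u g⁻¹
      = if leftOf u (invL x) (invL y) then 1 / 2 else -(1 / 2) := by
  classical
  set L1 := f.toWord with hL1
  set L2 := (g⁻¹).toWord with hL2
  have hg' : g⁻¹ ≠ 1 := inv_ne_one.mpr hg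
  have hL1ne : L1 ≠ [] := fun h => hf (toWord_eq_nil_iff.mp h)
  have hL2ne : L2 ≠ [] := fun h => hg' (toWord_eq_nil_iff.mp h)
  have hL1last : L1.getLast? = some x := hfx
  have hL2head : L2.head? = some (invL y) := by
    rw [hL2, toWord_inv, invRev, List.head?_reverse, List.getLast?_map, hgy]
    rfl
  have hred : RedW (L1 ++ L2) := by
    rw [RedW, List.isChain_append]
    refine ⟨redW_toWord f, redW_toWord g⁻¹, ?_⟩
    intro p hp q hq
    rw [hL1last, Option.mem_some_iff] at hp
    rw [hL2head, Option.mem_some_iff] at hq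
    subst hp; subst hq
    simp only [invL, Bool.not_not]
    rintro ⟨h1, h2⟩
    exact hxy (Prod.ext h1 h2)
  have hprod : (f * g⁻¹).toWord = L1 ++ L2 := by
    have : f * g⁻¹ = mk (L1 ++ L2) := by
      rw [← mul_mk, hL1, hL2, mk_toWord, mk_toWord]
    rw [this, toWord_mk, reduce_eq_self_of_redW _ hred]
  obtain ⟨z, hz⟩ : ∃ z, L2.getLast? = some z := by
    cases h' : L2.getLast? with
    | none => exact absurd (List.getLast?_eq_none_iff.mp h') hL2ne
    | some z => exact ⟨z, rfl⟩
  have hωcat : omegaW (L1 ++ L2) = omegaW L2 := by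
    unfold omegaW
    rw [List.getLast?_append, hz]
    rfl
  have hω1 : omegaW L1 = if x.2 then 1 / 2 else -(1 / 2) := by
    unfold omegaW
    rw [hL1last]
  have hα := alphaW_append u L1 L2 x (invL y) hL1last hL2head
  have hβ := betaW_append u L1 L2 x (invL y) hL1last hL2head
  unfold tau
  rw [hprod, hα, hβ, hωcat]
  have hgoal : alphaW u [x, invL y] + betaW u [x, invL y] - omegaW L1
      = if leftOf u (invL x) (invL y) then 1 / 2 else -(1 / 2) := by
    have eα : alphaW u [x, invL y]
        = (if true = x.2 ∧ false = (invL y).2 ∧ leftOf u (x.1, false) ((invL y).1, false)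
            then (1:ℝ) else 0)
        - (if false = x.2 ∧ true = (invL y).2 ∧ leftOf u ((invL y).1, true) (x.1, true)
            then (1:ℝ) else 0) := by
      rw [alphaW, key u x (invL y) true false (fun a b => leftOf u (a, false) (b, false)),
        key2 u x (invL y) false true (fun a b => leftOf u (a, true) (b, true))]
    have eβ : betaW u [x, invL y]
        = (if true = x.2 ∧ true = (invL y).2 ∧ leftOf u (x.1, false) ((invL y).1, true)
            then (1:ℝ) else 0)
        - (if false = x.2 ∧ false = (invL y).2 ∧ leftOf u ((invL y).1, false) (x.1, true)
            then (1:ℝ) else 0) := by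
      rw [betaW, key u x (invL y) true true (fun a b => leftOf u (a, false) (b, true)),
        key2 u x (invL y) false false (fun a b => leftOf u (a, false) (b, true))]
    have hne : invL x ≠ invL y := by
      intro he'
      exact hxy (Prod.ext (Prod.ext_iff.mp he').1 (Bool.not_inj (Prod.ext_iff.mp he').2))
    have hne2 : leftOf u (invL x) (invL y) ∨ leftOf u (invL y) (invL x) := by
      unfold leftOf
      rcases lt_trichotomy (u.idxOf (invL x)) (u.idxOf (invL y)) with h | h | h
      · exact Or.inl h
      · exact absurd (indexOf_inj'_s5 (hu.2 _) (hu.2 _) h) hne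
      · exact Or.inr h
    rw [eα, eβ, hω1]
    obtain ⟨i, bx⟩ := x
    obtain ⟨j, cy⟩ := y
    simp only [invL] at hne2 ⊢
    cases bx <;> cases cy <;>
      · simp only [Bool.not_true, Bool.not_false] at hne2
        norm_num
        rcases hne2 with hlt | hlt <;>
          split_ifs <;> first
            | (exfalso; simp only [leftOf] at *; omega)
            | norm_num
  rw [← hgoal]; ring
end
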